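/- (VC theorem / uniform law of large numbers) Let (X, μ) be a probability space and F ⊆ P(X) a family of measurable sets of VC-dimension at most k satisfying the measurability conditions: for each n, the map (x_1,…,x_n) ↦ sup_{F∈F} |Av(x_1,…,x_n; F) − μ(F)| is measurable, and the analogous two-sample map is measurable. Then for every ε > 0 there is N (depending only on k and ε) such that there exist x_1,…,x_N ∈ X with |Av(x_1,…,x_N; F) − μ(F)| < ε for all F ∈ F simultaneously. -/

import Mathlib

open MeasureTheory
open scoped ENNReal

/-- A family of sets `𝓕` shatters a finite set `s`. -/
def Shatters {X : Type*} (𝓕 : Set (Set X)) (s : Finset X) : Prop :=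
  ∀ t ⊆ s, ∃ F ∈ 𝓕, ∀ x ∈ s, (x ∈ F ↔ x ∈ t)

/-- `avgMem F x` is the fraction of the sample `x : Fin n → X` lying in `F`. -/
noncomputable def avgMem {X : Type*} (F : Set X) {n : ℕ} (x : Fin n → X) : ℝ :=
  (∑ i, F.indicator (fun _ => (1 : ℝ)) (x i)) / n

section Aux

open Finset Real Filter

/-! ### Auxiliary suprema lemmas -/

lemma VCaux.exists_of_lt_biSup {α : Type*} {P : α → Prop} {f : α → ℝ} {c : ℝ} (hc : 0 ≤ c)
    (h : c < ⨆ F, ⨆ (_ : P F), f F) : ∃ F, P F ∧ c < f F := by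
  by_contra hcon
  push_neg at hcon
  have : (⨆ F, ⨆ (_ : P F), f F) ≤ c :=
    Real.iSup_le (fun F => Real.iSup_le (fun hF => hcon F hF) hc) hc
  linarith

lemma VCaux.le_biSup {α : Type*} {P : α → Prop} {f : α → ℝ} (hbd : ∀ F, f F ≤ 2)
    {F : α} (hF : P F) : f F ≤ ⨆ G, ⨆ (_ : P G), f G := by
  have hb : BddAbove (Set.range fun G => ⨆ (_ : P G), f G) := by
    refine ⟨2, ?_⟩
    rintro v ⟨G, rfl⟩
    exact Real.iSup_le (fun _ => hbd G) (by norm_num)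
  calc f F = ⨆ (_ : P F), f F := (ciSup_pos (p := P F) (f := fun _ => f F) hF).symm
  _ ≤ _ := le_ciSup hb F

/-! ### Sign counting (finite Hoeffding) -/

noncomputable def VCsgn (b : Bool) : ℝ := if b then -1 else 1

lemma VCaux.signCountOne {n : ℕ} (hn : 0 < n) (a : Fin n → ℝ) (ha : ∀ i, |a i| ≤ 1)
    {s₀ : ℝ} (hs : 0 < s₀) :
    ((Finset.univ.filter (fun σ : Fin n → Bool =>
        s₀ ≤ ∑ i, VCsgn (σ i) * a i)).card : ℝ)
      ≤ 2 ^ n * Real.exp (-(s₀ ^ 2) / (2 * n)) := by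
  classical
  set t : ℝ := s₀ / n with ht
  have hnR : (0:ℝ) < n := by exact_mod_cast hn
  have htpos : 0 < t := div_pos hs hnR
  set Bad := Finset.univ.filter (fun σ : Fin n → Bool => s₀ ≤ ∑ i, VCsgn (σ i) * a i) with hBad
  have h1 : (Bad.card : ℝ) * Real.exp (t * s₀)
      ≤ ∑ σ : Fin n → Bool, Real.exp (t * ∑ i, VCsgn (σ i) * a i) := by
    have : ∑ σ ∈ Bad, Real.exp (t * s₀) ≤ ∑ σ ∈ Bad, Real.exp (t * ∑ i, VCsgn (σ i) * a i) := by
      apply Finset.sum_le_sum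
      intro σ hσ
      have := (Finset.mem_filter.1 hσ).2
      exact Real.exp_le_exp.2 (by nlinarith)
    simp only [Finset.sum_const, nsmul_eq_mul] at this
    refine this.trans (Finset.sum_le_sum_of_subset_of_nonneg (Finset.filter_subset _ _)
      (fun _ _ _ => (Real.exp_pos _).le))
  have h2 : ∑ σ : Fin n → Bool, Real.exp (t * ∑ i, VCsgn (σ i) * a i)
      = ∏ i, (∑ b : Bool, Real.exp (t * (VCsgn b * a i))) := by
    rw [Fintype.prod_sum]
    apply Finset.sum_congr rfl
    intro σ _
    rw [Finset.mul_sum, Real.exp_sum]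
  have h3 : ∀ i, (∑ b : Bool, Real.exp (t * (VCsgn b * a i))) ≤ 2 * Real.exp (t ^ 2 / 2) := by
    intro i
    have hc : (∑ b : Bool, Real.exp (t * (VCsgn b * a i))) = 2 * Real.cosh (t * a i) := by
      rw [Real.cosh_eq]
      simp [VCsgn]
      ring
    rw [hc]
    have h4 : Real.cosh (t * a i) ≤ Real.exp ((t * a i) ^ 2 / 2) := Real.cosh_le_exp_half_sq _
    have h5 : Real.exp ((t * a i) ^ 2 / 2) ≤ Real.exp (t ^ 2 / 2) := by
      apply Real.exp_le_exp.2
      have h6 : (t * a i) ^ 2 ≤ t ^ 2 := by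
        have : |a i| ≤ 1 := ha i
        have ha2 : (a i)^2 ≤ 1 := by
          have := abs_nonneg (a i)
          nlinarith [sq_abs (a i)]
        nlinarith [sq_nonneg t, sq_nonneg (a i)]
      linarith
    linarith [h4.trans h5]
  have h7 : ∏ i, (∑ b : Bool, Real.exp (t * (VCsgn b * a i)))
      ≤ ∏ i : Fin n, (2 * Real.exp (t ^ 2 / 2)) := by
    apply Finset.prod_le_prod
    · intro i _
      apply Finset.sum_nonneg; intro b _; exact (Real.exp_pos _).le
    · intro i _; exact h3 i
  have h8 : ∏ i : Fin n, (2 * Real.exp (t ^ 2 / 2)) = 2 ^ n * Real.exp (t ^ 2 / 2 * n) := by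
    rw [Finset.prod_const]
    simp [mul_pow, ← Real.exp_nat_mul]
    ring_nf
  have key : (Bad.card : ℝ) * Real.exp (t * s₀) ≤ 2 ^ n * Real.exp (t ^ 2 / 2 * n) := by
    calc (Bad.card : ℝ) * Real.exp (t * s₀) ≤ _ := h1
    _ = _ := h2
    _ ≤ _ := h7
    _ = _ := h8
  have hexp : Real.exp (t ^ 2 / 2 * n) = Real.exp (t * s₀) * Real.exp (-(s₀ ^ 2) / (2 * n)) := by
    rw [← Real.exp_add]
    congr 1
    rw [ht]
    field_simp
    ring
  rw [hexp, ← mul_assoc] at key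
  refine (mul_le_mul_iff_of_pos_right (Real.exp_pos (t * s₀))).1 ?_
  calc (Bad.card : ℝ) * Real.exp (t*s₀) ≤ _ := key
  _ = 2 ^ n * Real.exp (-(s₀ ^ 2) / (2 * n)) * Real.exp (t * s₀) := by ring

lemma VCaux.signCount {n : ℕ} (hn : 0 < n) (a : Fin n → ℝ) (ha : ∀ i, |a i| ≤ 1)
    {s₀ : ℝ} (hs : 0 < s₀) :
    ((Finset.univ.filter (fun σ : Fin n → Bool =>
        s₀ ≤ |∑ i, VCsgn (σ i) * a i|)).card : ℝ)
      ≤ 2 ^ n * (2 * Real.exp (-(s₀ ^ 2) / (2 * n))) := by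
  classical
  have hsub : (Finset.univ.filter (fun σ : Fin n → Bool => s₀ ≤ |∑ i, VCsgn (σ i) * a i|))
      ⊆ (Finset.univ.filter (fun σ : Fin n → Bool => s₀ ≤ ∑ i, VCsgn (σ i) * a i))
        ∪ (Finset.univ.filter (fun σ : Fin n → Bool => s₀ ≤ ∑ i, VCsgn (σ i) * (-a) i)) := by
    intro σ hσ
    have h := (Finset.mem_filter.1 hσ).2
    rcases le_abs.1 h with h' | h'
    · exact Finset.mem_union_left _ (Finset.mem_filter.2 ⟨Finset.mem_univ _, h'⟩)
    · refine Finset.mem_union_right _ (Finset.mem_filter.2 ⟨Finset.mem_univ _, ?_⟩)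
      calc s₀ ≤ -∑ i, VCsgn (σ i) * a i := h'
      _ = ∑ i, VCsgn (σ i) * (-a) i := by
          rw [← Finset.sum_neg_distrib]
          apply Finset.sum_congr rfl
          intros
          ring_nf
          simp
  have h1 := VCaux.signCountOne hn a ha hs
  have h2 := VCaux.signCountOne hn (-a) (fun i => by simpa using ha i) hs
  have hcc := Finset.card_le_card hsub
  have hu := Finset.card_union_le
    (Finset.univ.filter (fun σ : Fin n → Bool => s₀ ≤ ∑ i, VCsgn (σ i) * a i))
    (Finset.univ.filter (fun σ : Fin n → Bool => s₀ ≤ ∑ i, VCsgn (σ i) * (-a) i))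
  have hcast : ((Finset.univ.filter (fun σ : Fin n → Bool =>
        s₀ ≤ |∑ i, VCsgn (σ i) * a i|)).card : ℝ)
      ≤ ((Finset.univ.filter (fun σ : Fin n → Bool => s₀ ≤ ∑ i, VCsgn (σ i) * a i)).card : ℝ)
        + ((Finset.univ.filter (fun σ : Fin n → Bool =>
            s₀ ≤ ∑ i, VCsgn (σ i) * (-a) i)).card : ℝ) := by
    exact_mod_cast hcc.trans hu
  linarith

/-! ### Sauer-Shelah trace counting -/

lemma VCaux.traceCount {X : Type} {𝓕 : Set (Set X)} {k : ℕ}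
    (hVC : ∀ s : Finset X, Shatters 𝓕 s → s.card ≤ k)
    {ι : Type} [Fintype ι] [DecidableEq ι] (point : ι → X) :
    ∀ (𝒜 : Finset (Finset ι)),
      (∀ u ∈ 𝒜, ∃ F ∈ 𝓕, ∀ j, j ∈ u ↔ point j ∈ F) →
      𝒜.card ≤ ∑ i ∈ Finset.Iic k, (Fintype.card ι).choose i := by
  classical
  intro 𝒜 h𝒜
  have hvc : 𝒜.vcDim ≤ k := by
    apply Finset.sup_le
    intro s hs
    have hsh : 𝒜.Shatters s := Finset.mem_shatterer.1 hs
    have hinj : Set.InjOn point s := by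
      intro j hj j' hj' hpt
      by_contra hne
      obtain ⟨u, hu, hsu⟩ := hsh (Finset.singleton_subset_iff.2 hj)
      obtain ⟨F, hF, hchar⟩ := h𝒜 u hu
      have hjF : point j ∈ F := by
        have : j ∈ s ∩ u := hsu ▸ Finset.mem_singleton_self j
        exact (hchar j).1 (Finset.mem_inter.1 this).2
      have hj'F : point j' ∉ F := by
        intro hmem
        have : j' ∈ s ∩ u := Finset.mem_inter.2 ⟨hj', (hchar j').2 hmem⟩
        rw [hsu, Finset.mem_singleton] at this
        exact hne this.symm
      exact hj'F (hpt ▸ hjF)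
    have hcard : (s.image point).card = s.card := Finset.card_image_of_injOn hinj
    have hshat : Shatters 𝓕 (s.image point) := by
      intro t ht
      obtain ⟨u, hu, hsu⟩ := hsh (Finset.filter_subset (fun j => point j ∈ t) s)
      obtain ⟨F, hF, hchar⟩ := h𝒜 u hu
      refine ⟨F, hF, ?_⟩
      intro x hx
      obtain ⟨j, hj, rfl⟩ := Finset.mem_image.1 hx
      constructor
      · intro hxF
        have : j ∈ s ∩ u := Finset.mem_inter.2 ⟨hj, (hchar j).2 hxF⟩
        rw [hsu] at this
        exact (Finset.mem_filter.1 this).2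
      · intro hxt
        have : j ∈ Finset.filter (fun j => point j ∈ t) s := Finset.mem_filter.2 ⟨hj, hxt⟩
        rw [← hsu] at this
        exact (hchar j).1 (Finset.mem_inter.1 this).2
    calc s.card = (s.image point).card := hcard.symm
    _ ≤ k := hVC _ hshat
  calc 𝒜.card ≤ 𝒜.shatterer.card := Finset.card_le_card_shatterer 𝒜
  _ ≤ ∑ i ∈ Finset.Iic 𝒜.vcDim, (Fintype.card ι).choose i := Finset.card_shatterer_le_sum_vcDim
  _ ≤ ∑ i ∈ Finset.Iic k, (Fintype.card ι).choose i :=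
      Finset.sum_le_sum_of_subset (Finset.Iic_subset_Iic.2 hvc)

/-! ### Measure-preserving swaps -/

def VCswapFun {n : ℕ} (σ : Fin n → Bool) : (Fin n ⊕ Fin n) → (Fin n ⊕ Fin n) :=
  fun j => match j with
  | Sum.inl i => if σ i then Sum.inr i else Sum.inl i
  | Sum.inr i => if σ i then Sum.inl i else Sum.inr i

lemma VCswapFun_involutive {n : ℕ} (σ : Fin n → Bool) : Function.Involutive (VCswapFun σ) := by
  intro j
  rcases j with i | i <;> by_cases h : σ i <;> simp [VCswapFun, h]

def VCswapPerm {n : ℕ} (σ : Fin n → Bool) : (Fin n ⊕ Fin n) ≃ (Fin n ⊕ Fin n) :=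
  (VCswapFun_involutive σ).toPerm

def VCswapMap {X : Type} {n : ℕ} (σ : Fin n → Bool) :
    (Fin n → X) × (Fin n → X) → (Fin n → X) × (Fin n → X) :=
  fun p => (fun i => if σ i then p.2 i else p.1 i, fun i => if σ i then p.1 i else p.2 i)

lemma VCswapMap_measurable {X : Type} [MeasurableSpace X] {n : ℕ} (σ : Fin n → Bool) :
    Measurable (VCswapMap (X := X) σ) := by
  apply Measurable.prodMk
  · apply measurable_pi_lambda
    intro i
    by_cases h : σ i <;> simp only [VCswapMap, h, if_true, if_false]
    · exact (measurable_pi_apply i).comp measurable_snd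
    · exact (measurable_pi_apply i).comp measurable_fst
  · apply measurable_pi_lambda
    intro i
    by_cases h : σ i <;> simp only [VCswapMap, h, if_true, if_false]
    · exact (measurable_pi_apply i).comp measurable_fst
    · exact (measurable_pi_apply i).comp measurable_snd

lemma VCswapMap_measurePreserving {X : Type} [MeasurableSpace X] {n : ℕ}
    (μ : Measure X) [SigmaFinite μ] (σ : Fin n → Bool) :
    MeasurePreserving (VCswapMap (X := X) σ)
      ((Measure.pi fun _ : Fin n => μ).prod (Measure.pi fun _ : Fin n => μ))
      ((Measure.pi fun _ : Fin n => μ).prod (Measure.pi fun _ : Fin n => μ)) := by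
  have he : MeasurePreserving (MeasurableEquiv.sumPiEquivProdPi (fun _ : Fin n ⊕ Fin n => X))
      (Measure.pi fun _ : Fin n ⊕ Fin n => μ)
      ((Measure.pi fun _ : Fin n => μ).prod (Measure.pi fun _ : Fin n => μ)) :=
    measurePreserving_sumPiEquivProdPi (fun _ => μ)
  have hg : MeasurePreserving
      (MeasurableEquiv.arrowCongr' (VCswapPerm σ) (MeasurableEquiv.refl X))
      (Measure.pi fun _ : Fin n ⊕ Fin n => μ) (Measure.pi fun _ : Fin n ⊕ Fin n => μ) :=
    measurePreserving_arrowCongr' (fun _ => μ) (fun _ => μ) (VCswapPerm σ)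
      (MeasurableEquiv.refl X) (fun _ => MeasurePreserving.id μ)
  have hcomp := (he.comp hg).comp he.symm
  have heq : (fun p => (MeasurableEquiv.sumPiEquivProdPi (fun _ : Fin n ⊕ Fin n => X))
        ((MeasurableEquiv.arrowCongr' (VCswapPerm σ) (MeasurableEquiv.refl X))
          ((MeasurableEquiv.sumPiEquivProdPi (fun _ : Fin n ⊕ Fin n => X)).symm p)))
      = VCswapMap (X := X) (n := n) σ := by
    funext p
    have hsymm : (VCswapPerm σ).symm = VCswapPerm σ := by
      ext j
      exact congrFun (congrArg _ ((VCswapFun_involutive σ).toPerm_symm)) j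
    ext i
    · show ((MeasurableEquiv.sumPiEquivProdPi (fun _ : Fin n ⊕ Fin n => X)).symm p)
        ((VCswapPerm σ).symm (Sum.inl i)) = _
      rw [hsymm]
      show ((MeasurableEquiv.sumPiEquivProdPi (fun _ : Fin n ⊕ Fin n => X)).symm p)
        (VCswapFun σ (Sum.inl i)) = _
      by_cases h : σ i <;> simp [VCswapFun, h, MeasurableEquiv.sumPiEquivProdPi,
        Equiv.sumPiEquivProdPi, VCswapMap]
    · show ((MeasurableEquiv.sumPiEquivProdPi (fun _ : Fin n ⊕ Fin n => X)).symm p)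
        ((VCswapPerm σ).symm (Sum.inr i)) = _
      rw [hsymm]
      show ((MeasurableEquiv.sumPiEquivProdPi (fun _ : Fin n ⊕ Fin n => X)).symm p)
        (VCswapFun σ (Sum.inr i)) = _
      by_cases h : σ i <;> simp [VCswapFun, h, MeasurableEquiv.sumPiEquivProdPi,
        Equiv.sumPiEquivProdPi, VCswapMap]
  have h2 : VCswapMap (X := X) (n := n) σ
      = (⇑(MeasurableEquiv.sumPiEquivProdPi fun _ : Fin n ⊕ Fin n => X) ∘
          ⇑(MeasurableEquiv.arrowCongr' (VCswapPerm σ) (MeasurableEquiv.refl X))) ∘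
        ⇑(MeasurableEquiv.sumPiEquivProdPi fun _ : Fin n ⊕ Fin n => X).symm := by
    funext p
    exact (congrFun heq p).symm
  rw [h2]
  exact hcomp

/-! ### avgMem basics and Chebyshev -/

lemma VCaux.indicator_mem_Icc {X : Type*} (F : Set X) (a : X) :
    F.indicator (fun _ => (1 : ℝ)) a ∈ Set.Icc (0:ℝ) 1 := by
  by_cases h : a ∈ F <;> simp [Set.indicator_of_mem, Set.indicator_of_notMem, h]

lemma VCaux.avgMem_mem_Icc {X : Type*} (F : Set X) {n : ℕ} (hn : 0 < n) (x : Fin n → X) :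
    avgMem F x ∈ Set.Icc (0:ℝ) 1 := by
  have hnR : (0:ℝ) < n := by exact_mod_cast hn
  constructor
  · apply div_nonneg _ hnR.le
    apply Finset.sum_nonneg
    intro i _
    exact (VCaux.indicator_mem_Icc F (x i)).1
  · rw [avgMem, div_le_one hnR]
    calc ∑ i, F.indicator (fun _ => (1:ℝ)) (x i) ≤ ∑ _i : Fin n, (1:ℝ) :=
      Finset.sum_le_sum (fun i _ => (VCaux.indicator_mem_Icc F (x i)).2)
    _ = n := by simp

lemma VCaux.toReal_mem_Icc {X : Type} [MeasurableSpace X] (μ : Measure X)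
    [IsProbabilityMeasure μ] (F : Set X) : (μ F).toReal ∈ Set.Icc (0:ℝ) 1 := by
  constructor
  · exact ENNReal.toReal_nonneg
  · have := ENNReal.toReal_mono ENNReal.one_ne_top (prob_le_one (μ := μ) (s := F))
    simpa using this

lemma VCaux.avgMem_measurable {X : Type*} [MeasurableSpace X] {F : Set X}
    (hF : MeasurableSet F) (n : ℕ) : Measurable (fun y : Fin n → X => avgMem F y) := by
  apply Measurable.div_const
  exact Finset.measurable_sum _ (fun i _ =>
    (measurable_const.indicator hF).comp (measurable_pi_apply i))

lemma VCaux.cheb {X : Type} [MeasurableSpace X] (μ : Measure X) [IsProbabilityMeasure μ]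
    {F : Set X} (hF : MeasurableSet F) {n : ℕ} (hn : 0 < n) {r : ℝ} (hr : 0 < r) :
    (Measure.pi fun _ : Fin n => μ) {y | r < |avgMem F y - (μ F).toReal|}
      ≤ ENNReal.ofReal (1 / (n * r ^ 2)) := by
  classical
  have hnR : (0:ℝ) < n := by exact_mod_cast hn
  set p : ℝ := (μ F).toReal with hp
  set Z : X → ℝ := fun a => F.indicator (fun _ => (1:ℝ)) a - p with hZ
  have hZmeas : Measurable Z := (measurable_const.indicator hF).sub measurable_const
  have hpmem : p ∈ Set.Icc (0:ℝ) 1 := VCaux.toReal_mem_Icc μ F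
  have hZbound : ∀ a, |Z a| ≤ 1 := by
    intro a
    have h := VCaux.indicator_mem_Icc F a
    have hZa : Z a = F.indicator (fun _ => (1:ℝ)) a - p := rfl
    rw [abs_le, hZa]
    constructor
    · linarith [h.1, hpmem.2]
    · linarith [h.2, hpmem.1]
  have hZint : Integrable Z μ :=
    ⟨hZmeas.aestronglyMeasurable,
      HasFiniteIntegral.of_bounded (C := 1) (Filter.Eventually.of_forall
        (fun a => by simpa using hZbound a))⟩
  have hZmean : ∫ a, Z a ∂μ = 0 := by
    rw [hZ]
    rw [integral_sub ?_ (integrable_const p)]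
    · have : ∫ a, F.indicator (fun _ => (1:ℝ)) a ∂μ = (μ F).toReal := integral_indicator_one hF
      simp [this, hp]
    · exact ⟨(measurable_const.indicator hF).aestronglyMeasurable,
        HasFiniteIntegral.of_bounded (C := 1) (Filter.Eventually.of_forall (fun a => by
          have := VCaux.indicator_mem_Icc F a
          rw [Real.norm_eq_abs, abs_le]; constructor <;> linarith [this.1, this.2]))⟩
  set P1 : Measure (Fin n → X) := Measure.pi fun _ : Fin n => μ with hP1
  haveI : IsProbabilityMeasure P1 := by rw [hP1]; infer_instance
  set S : (Fin n → X) → ℝ := fun y => ∑ i, Z (y i) with hS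
  have hSmeas : Measurable S :=
    Finset.measurable_sum _ (fun i _ => hZmeas.comp (measurable_pi_apply i))
  have hprodint : ∀ i j : Fin n, Integrable (fun y : Fin n → X => Z (y i) * Z (y j)) P1 := by
    intro i j
    refine ⟨((hZmeas.comp (measurable_pi_apply i)).mul
      (hZmeas.comp (measurable_pi_apply j))).aestronglyMeasurable, ?_⟩
    refine HasFiniteIntegral.of_bounded (C := 1) (Filter.Eventually.of_forall (fun y => ?_))
    rw [Real.norm_eq_abs, abs_mul]
    calc |Z (y i)| * |Z (y j)| ≤ 1 * 1 :=
      mul_le_mul (hZbound _) (hZbound _) (abs_nonneg _) zero_le_one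
    _ = 1 := one_mul 1
  have hS2 : ∫ y, (S y) ^ 2 ∂P1 ≤ (n : ℝ) := by
    have hexpand : ∀ y, (S y) ^ 2 = ∑ i, ∑ j, Z (y i) * Z (y j) := by
      intro y
      rw [hS, sq, Finset.sum_mul_sum]
    have h1 : ∫ y, (S y) ^ 2 ∂P1 = ∑ i, ∑ j, ∫ y, Z (y i) * Z (y j) ∂P1 := by
      simp_rw [hexpand]
      rw [integral_finset_sum _ (fun i _ => integrable_finset_sum _ (fun j _ => hprodint i j))]
      exact Finset.sum_congr rfl (fun i _ =>
        integral_finset_sum _ (fun j _ => hprodint i j))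
    rw [h1]
    have hoff : ∀ i j : Fin n, i ≠ j → ∫ y, Z (y i) * Z (y j) ∂P1 = 0 := by
      intro i j hij
      letI : MeasureSpace X := ⟨μ⟩
      set f : Fin n → X → ℝ := fun l => if l = i ∨ l = j then Z else fun _ => (1:ℝ) with hf
      have hpt : ∀ y : Fin n → X, Z (y i) * Z (y j) = ∏ l, f l (y l) := by
        intro y
        have : ∏ l, f l (y l) = ∏ l ∈ ({i, j} : Finset (Fin n)), f l (y l) := by
          apply (Finset.prod_subset (Finset.subset_univ _) _).symm
          intro l _ hl
          simp only [Finset.mem_insert, Finset.mem_singleton] at hl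
          push_neg at hl
          simp [hf, hl.1, hl.2]
        rw [this, Finset.prod_pair hij]
        simp [hf]
      have hPvol : P1 = (volume : Measure (Fin n → X)) := by
        rw [hP1]; rfl
      rw [hPvol]
      simp_rw [hpt]
      rw [MeasureTheory.volume_pi, MeasureTheory.integral_fintype_prod_eq_prod f]
      apply Finset.prod_eq_zero (Finset.mem_univ i)
      have : f i = Z := by simp [hf]
      rw [this]
      exact hZmean
    have hdiag : ∀ i : Fin n, ∫ y, Z (y i) * Z (y i) ∂P1 ≤ 1 := by
      intro i
      have : ∀ y : Fin n → X, Z (y i) * Z (y i) ≤ 1 := by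
        intro y
        have := hZbound (y i)
        nlinarith [abs_nonneg (Z (y i)), sq_abs (Z (y i))]
      calc ∫ y, Z (y i) * Z (y i) ∂P1 ≤ ∫ _, (1:ℝ) ∂P1 :=
        integral_mono (hprodint i i) (integrable_const 1) this
      _ = 1 := by simp
    calc ∑ i, ∑ j, ∫ y, Z (y i) * Z (y j) ∂P1
        ≤ ∑ i : Fin n, ∑ j : Fin n, (if i = j then (1:ℝ) else 0) := by
          apply Finset.sum_le_sum
          intro i _
          apply Finset.sum_le_sum
          intro j _
          by_cases h : i = j
          · subst h; simpa using hdiag i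
          · rw [if_neg h, hoff i j h]
    _ = (n : ℝ) := by simp
  have hSavg : ∀ y : Fin n → X, avgMem F y - p = S y / n := by
    intro y
    have hSy : S y = (∑ i, F.indicator (fun _ => (1:ℝ)) (y i)) - n * p := by
      show ∑ i, (F.indicator (fun _ => (1:ℝ)) (y i) - p) = _
      rw [Finset.sum_sub_distrib]
      simp [mul_comm]
    rw [avgMem, hSy, sub_div]
    congr 1
    field_simp
  have hsub : {y : Fin n → X | r < |avgMem F y - p|} ⊆ {y | ((n:ℝ) * r) ^ 2 ≤ (S y) ^ 2} := by
    intro y hy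
    simp only [Set.mem_setOf_eq] at hy ⊢
    have h1 : (n:ℝ) * r < |S y| := by
      have h0 := hy
      rw [hSavg y, abs_div, abs_of_pos hnR] at h0
      have := (lt_div_iff₀ hnR).1 h0
      linarith [this]
    have h2 : ((n:ℝ) * r) ^ 2 ≤ |S y| ^ 2 := pow_le_pow_left₀ (by positivity) h1.le 2
    rw [sq_abs] at h2
    exact h2
  have hmarkov := mul_meas_ge_le_integral_of_nonneg
    (μ := P1) (f := fun y => (S y)^2)
    (Filter.Eventually.of_forall (fun y => sq_nonneg _))
    ⟨(hSmeas.pow_const 2).aestronglyMeasurable,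
      HasFiniteIntegral.of_bounded (C := (n:ℝ)^2) (Filter.Eventually.of_forall (fun y => by
        rw [Real.norm_eq_abs, abs_of_nonneg (sq_nonneg _)]
        have hb : |S y| ≤ (n:ℝ) := by
          calc |S y| ≤ ∑ i : Fin n, |Z (y i)| := Finset.abs_sum_le_sum_abs _ _
          _ ≤ ∑ _i : Fin n, (1:ℝ) := Finset.sum_le_sum (fun i _ => hZbound _)
          _ = (n:ℝ) := by simp
        calc (S y)^2 = |S y|^2 := (sq_abs _).symm
        _ ≤ (n:ℝ)^2 := pow_le_pow_left₀ (abs_nonneg _) hb 2))⟩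
    (((n:ℝ) * r) ^ 2)
  have hset : P1 {y | ((n:ℝ)*r)^2 ≤ (S y)^2} ≤ ENNReal.ofReal (1 / (n * r ^ 2)) := by
    have htoReal : (P1 {y | ((n:ℝ)*r)^2 ≤ (S y)^2}).toReal ≤ 1 / ((n:ℝ) * r^2) := by
      have h2 := hmarkov.trans hS2
      rw [measureReal_def] at h2
      rw [le_div_iff₀ (by positivity : (0:ℝ) < (n:ℝ) * r^2)]
      nlinarith [ENNReal.toReal_nonneg (a := P1 {y | ((n:ℝ)*r)^2 ≤ (S y)^2})]
    have hfin : P1 {y | ((n:ℝ)*r)^2 ≤ (S y)^2}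
        = ENNReal.ofReal ((P1 {y | ((n:ℝ)*r)^2 ≤ (S y)^2}).toReal) :=
      (ENNReal.ofReal_toReal (measure_ne_top _ _)).symm
    rw [hfin]
    exact ENNReal.ofReal_le_ofReal htoReal
  exact (measure_mono hsub).trans hset

/-! ### Choice of N -/

lemma VCaux.chooseN (k : ℕ) (ε : ℝ) (hε : 0 < ε) :
    ∃ N : ℕ, 0 < N ∧ 128 ≤ (N:ℝ) * ε^2 ∧
      ((k:ℝ)+1) * (2*(N:ℝ))^k * (2 * Real.exp (-((N:ℝ)*ε^2)/32)) < 1/2 := by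
  set c : ℝ := ε^2/32 with hc
  have hcpos : 0 < c := by positivity
  set B : ℝ := ((k:ℝ)+1) * 2^(k+1) / c^k with hB
  have htend0 : Tendsto (fun x : ℝ => x^k * Real.exp (-x)) atTop (nhds 0) :=
    tendsto_pow_mul_exp_neg_atTop_nhds_zero k
  have htendc : Tendsto (fun n : ℕ => c * (n:ℝ)) atTop atTop :=
    (tendsto_natCast_atTop_atTop (R := ℝ)).const_mul_atTop hcpos
  have htend1 : Tendsto (fun n : ℕ => (c*(n:ℝ))^k * Real.exp (-(c*(n:ℝ)))) atTop (nhds 0) :=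
    htend0.comp htendc
  have htend2 : Tendsto (fun n : ℕ =>
      ((k:ℝ)+1) * (2*(n:ℝ))^k * (2 * Real.exp (-((n:ℝ)*ε^2)/32))) atTop (nhds 0) := by
    have heq : (fun n : ℕ => ((k:ℝ)+1) * (2*(n:ℝ))^k * (2 * Real.exp (-((n:ℝ)*ε^2)/32)))
        = fun n : ℕ => B * ((c*(n:ℝ))^k * Real.exp (-(c*(n:ℝ)))) := by
      funext n
      have harg : -((n:ℝ)*ε^2)/32 = -(c*(n:ℝ)) := by rw [hc]; ring
      rw [harg, hB]
      rw [mul_pow, mul_pow]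
      have : (c:ℝ)^k ≠ 0 := by positivity
      field_simp
      ring
    rw [heq]
    have := htend1.const_mul B
    simpa using this
  have h1 : ∀ᶠ n : ℕ in atTop,
      ((k:ℝ)+1) * (2*(n:ℝ))^k * (2 * Real.exp (-((n:ℝ)*ε^2)/32)) < 1/2 := by
    have := htend2.eventually (eventually_lt_nhds (show (0:ℝ) < 1/2 by norm_num))
    simpa using this
  have h2 : ∀ᶠ n : ℕ in atTop, 128 ≤ (n:ℝ) * ε^2 := by
    have h3 : Tendsto (fun n : ℕ => (n:ℝ) * ε^2) atTop atTop :=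
      (tendsto_natCast_atTop_atTop (R := ℝ)).atTop_mul_const (by positivity)
    exact h3.eventually_ge_atTop 128
  have h4 : ∀ᶠ n : ℕ in atTop, (0 < n) := eventually_gt_atTop 0
  obtain ⟨N, hN⟩ := ((h1.and h2).and h4).exists
  exact ⟨N, hN.2, hN.1.2, hN.1.1⟩

end Aux

/-- VC theorem / uniform law of large numbers: for every `k` and
`ε > 0` there is `N` (depending only on `k` and `ε`) such that for every probability
space `(X, μ)` and every family `𝓕` of measurable subsets of `X` of VC-dimension at
most `k` satisfying the measurability conditions (one-sample and two-sample sup maps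
are measurable), there exist `x₁, …, x_N ∈ X` with
`|Av(x₁,…,x_N; F) − μ(F)| < ε` for all `F ∈ 𝓕` simultaneously. -/
theorem stmt11 (k : ℕ) (ε : ℝ) (hε : 0 < ε) :
    ∃ N : ℕ, 0 < N ∧
      ∀ (X : Type) (mX : MeasurableSpace X) (μ : Measure X),
        IsProbabilityMeasure μ →
        ∀ 𝓕 : Set (Set X),
          (∀ F ∈ 𝓕, MeasurableSet F) →
          (∀ s : Finset X, Shatters 𝓕 s → s.card ≤ k) →
          (∀ n : ℕ, Measurable fun x : Fin n → X =>
            ⨆ F ∈ 𝓕, |avgMem F x - (μ F).toReal|) →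
          (∀ n : ℕ, Measurable fun p : (Fin n → X) × (Fin n → X) =>
            ⨆ F ∈ 𝓕, |avgMem F p.1 - avgMem F p.2|) →
          ∃ x : Fin N → X, ∀ F ∈ 𝓕, |avgMem F x - (μ F).toReal| < ε := by
  classical
  obtain ⟨N, hNpos, hN128, hNsmall⟩ := VCaux.chooseN k ε hε
  refine ⟨N, hNpos, ?_⟩
  intro X mX μ hprob 𝓕 hmeas hVC hm1 hm2
  haveI := hprob
  have hNR : (0:ℝ) < N := by exact_mod_cast hNpos
  set P1 : Measure (Fin N → X) := Measure.pi fun _ => μ with hP1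
  haveI : IsProbabilityMeasure P1 := by rw [hP1]; infer_instance
  set P2 : Measure ((Fin N → X) × (Fin N → X)) := P1.prod P1 with hP2
  haveI : IsProbabilityMeasure P2 := by rw [hP2]; infer_instance
  set g : (Fin N → X) → ℝ := fun x => ⨆ F ∈ 𝓕, |avgMem F x - (μ F).toReal| with hg
  have hgmeas : Measurable g := hm1 N
  set B : Set (Fin N → X) := {x | ε/2 < g x} with hB
  have hBmeas : MeasurableSet B := measurableSet_lt measurable_const hgmeas
  set g2 : ((Fin N → X) × (Fin N → X)) → ℝ :=
    fun p => ⨆ F ∈ 𝓕, |avgMem F p.1 - avgMem F p.2| with hg2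
  have hg2meas : Measurable g2 := hm2 N
  set B2 : Set ((Fin N → X) × (Fin N → X)) := {p | 3*ε/8 ≤ g2 p} with hB2
  have hB2meas : MeasurableSet B2 := measurableSet_le measurable_const hg2meas
  suffices hPB : P1 B < 1 by
    have hcompl : P1 Bᶜ ≠ 0 := by
      rw [prob_compl_eq_one_sub hBmeas]
      intro h0
      rw [tsub_eq_zero_iff_le] at h0
      exact absurd h0 (not_le.2 hPB)
    obtain ⟨x, hx⟩ := nonempty_of_measure_ne_zero hcompl
    refine ⟨x, ?_⟩
    intro F hF
    have hxB : ¬ (ε/2 < g x) := hx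
    push_neg at hxB
    have hbd : ∀ G : Set X, |avgMem G x - (μ G).toReal| ≤ 2 := by
      intro G
      have h1 := VCaux.avgMem_mem_Icc G hNpos x
      have h2 := VCaux.toReal_mem_Icc μ G
      rw [abs_le]
      constructor <;> [linarith [h1.1, h2.2]; linarith [h1.2, h2.1]]
    have hval : |avgMem F x - (μ F).toReal| ≤ g x :=
      VCaux.le_biSup (f := fun G => |avgMem G x - (μ G).toReal|) hbd hF
    linarith
  -- Chebyshev with radius ε/8
  have chebHalf : ∀ F, F ∈ 𝓕 →
      P1 {y | ε/8 < |avgMem F y - (μ F).toReal|} ≤ ENNReal.ofReal (1/2) := by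
    intro F hF
    refine (VCaux.cheb μ (hmeas F hF) hNpos (by positivity : (0:ℝ) < ε/8)).trans ?_
    apply ENNReal.ofReal_le_ofReal
    rw [div_le_div_iff₀ (by positivity) (by norm_num)]
    nlinarith [hN128]
  -- symmetrization : P1 B ≤ 2 * P2 B2
  have hsym : P1 B ≤ 2 * P2 B2 := by
    have hsec : ∀ x ∈ B, ENNReal.ofReal (1/2) ≤ P1 (Prod.mk x ⁻¹' B2) := by
      intro x hx
      have hgx : ε/2 < g x := hx
      obtain ⟨F, hF, hFx⟩ := VCaux.exists_of_lt_biSup (by positivity) hgx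
      set G : Set (Fin N → X) := {y | ¬ (ε/8 < |avgMem F y - (μ F).toReal|)} with hG
      have hGsub : G ⊆ Prod.mk x ⁻¹' B2 := by
        intro y hy
        have hy' : |avgMem F y - (μ F).toReal| ≤ ε/8 := not_lt.1 hy
        show (x, y) ∈ B2
        show 3*ε/8 ≤ g2 (x, y)
        have hbd2 : ∀ H : Set X, |avgMem H x - avgMem H y| ≤ 2 := by
          intro H
          have h1 := VCaux.avgMem_mem_Icc H hNpos x
          have h2 := VCaux.avgMem_mem_Icc H hNpos y
          rw [abs_le]
          constructor <;> [linarith [h1.1, h2.2]; linarith [h1.2, h2.1]]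
        have hle : |avgMem F x - avgMem F y| ≤ g2 (x, y) :=
          VCaux.le_biSup (f := fun H => |avgMem H x - avgMem H y|) hbd2 hF
        have htri : |avgMem F x - (μ F).toReal|
            ≤ |avgMem F x - avgMem F y| + |avgMem F y - (μ F).toReal| :=
          abs_sub_le _ _ _
        linarith
      have hGmeas : MeasurableSet G := by
        have : MeasurableSet {y : Fin N → X | ε/8 < |avgMem F y - (μ F).toReal|} :=
          measurableSet_lt measurable_const
            ((VCaux.avgMem_measurable (hmeas F hF) N).sub measurable_const).abs
        exact this.compl
      have hGc : P1 Gᶜ ≤ ENNReal.ofReal (1/2) := by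
        have hGc' : Gᶜ = {y | ε/8 < |avgMem F y - (μ F).toReal|} := by
          ext y; simp [hG]
        rw [hGc']
        exact chebHalf F hF
      have hGge : ENNReal.ofReal (1/2) ≤ P1 G := by
        have h1 : P1 G = 1 - P1 Gᶜ := by
          rw [← prob_compl_eq_one_sub hGmeas.compl, compl_compl]
        rw [h1]
        have hadd : P1 Gᶜ + ENNReal.ofReal (1/2) ≤ 1 := by
          calc P1 Gᶜ + ENNReal.ofReal (1/2)
              ≤ ENNReal.ofReal (1/2) + ENNReal.ofReal (1/2) := add_le_add_left hGc _
          _ = 1 := by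
              rw [← ENNReal.ofReal_add (by norm_num) (by norm_num)]
              norm_num
        exact ENNReal.le_sub_of_add_le_left (measure_ne_top _ _) hadd
      exact hGge.trans (measure_mono hGsub)
    have hprod : P2 B2 = ∫⁻ x, P1 (Prod.mk x ⁻¹' B2) ∂P1 := by
      rw [hP2]
      exact Measure.prod_apply hB2meas
    have hlow : ENNReal.ofReal (1/2) * P1 B ≤ P2 B2 := by
      rw [hprod]
      have hmono : ∫⁻ x, B.indicator (fun _ => ENNReal.ofReal (1/2)) x ∂P1
          ≤ ∫⁻ x, P1 (Prod.mk x ⁻¹' B2) ∂P1 := by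
        apply lintegral_mono
        intro x
        by_cases hx : x ∈ B
        · rw [Set.indicator_of_mem hx]
          exact hsec x hx
        · rw [Set.indicator_of_notMem hx]
          exact zero_le
      calc ENNReal.ofReal (1/2) * P1 B
          = ∫⁻ x, B.indicator (fun _ => ENNReal.ofReal (1/2)) x ∂P1 := by
            rw [lintegral_indicator hBmeas]
            simp [mul_comm]
      _ ≤ _ := hmono
    have h2half : (2:ℝ≥0∞) * ENNReal.ofReal (1/2) = 1 := by
      rw [show (2:ℝ≥0∞) = ENNReal.ofReal 2 by simp]
      rw [← ENNReal.ofReal_mul (by norm_num)]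
      norm_num
    calc P1 B = (2 * ENNReal.ofReal (1/2)) * P1 B := by rw [h2half, one_mul]
    _ = 2 * (ENNReal.ofReal (1/2) * P1 B) := by rw [mul_assoc]
    _ ≤ 2 * P2 B2 := by gcongr
  -- counting : P2 B2 ≤ ofReal δ
  set δ : ℝ := ((k:ℝ)+1) * (2*(N:ℝ))^k * (2 * Real.exp (-((N:ℝ)*ε^2)/32)) with hδ
  have hδ0 : (0:ℝ) ≤ δ := by positivity
  have hswap : P2 B2 ≤ ENNReal.ofReal δ := by
    -- pointwise counting
    have hpoint : ∀ z : (Fin N → X) × (Fin N → X),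
        ((Finset.univ.filter (fun σ : Fin N → Bool => VCswapMap σ z ∈ B2)).card : ℝ)
          ≤ δ * 2^N := by
      rintro ⟨x, y⟩
      set point : Fin N ⊕ Fin N → X := Sum.elim x y with hpointdef
      set 𝒜 : Finset (Finset (Fin N ⊕ Fin N)) :=
        Finset.univ.filter (fun u => ∃ F ∈ 𝓕, ∀ j, j ∈ u ↔ point j ∈ F) with h𝒜def
      have h𝒜card : 𝒜.card ≤ (k+1) * (2*N)^k := by
        have h1 := VCaux.traceCount hVC point 𝒜
          (fun u hu => (Finset.mem_filter.1 hu).2)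
        have hcardι : Fintype.card (Fin N ⊕ Fin N) = 2*N := by simp [two_mul]
        rw [hcardι] at h1
        refine h1.trans ?_
        have h2 : ∀ i ∈ Finset.Iic k, (2*N).choose i ≤ (2*N)^k := by
          intro i hi
          calc (2*N).choose i ≤ (2*N)^i := Nat.choose_le_pow _ _
          _ ≤ (2*N)^k := Nat.pow_le_pow_right (by omega) (Finset.mem_Iic.1 hi)
        calc ∑ i ∈ Finset.Iic k, (2*N).choose i
            ≤ (Finset.Iic k).card • (2*N)^k := Finset.sum_le_card_nsmul _ _ _ h2
        _ = (k+1) * (2*N)^k := by rw [Nat.card_Iic]; rw [smul_eq_mul]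
      -- bad sigma sets per trace
      set aOf : Finset (Fin N ⊕ Fin N) → Fin N → ℝ := fun u i =>
        (if Sum.inl i ∈ u then (1:ℝ) else 0) - (if Sum.inr i ∈ u then (1:ℝ) else 0) with haOf
      set Badu : Finset (Fin N ⊕ Fin N) → Finset (Fin N → Bool) := fun u =>
        Finset.univ.filter (fun σ : Fin N → Bool =>
          (N:ℝ)*ε/4 ≤ |∑ i, VCsgn (σ i) * aOf u i|) with hBadu
      have hcover : (Finset.univ.filter (fun σ : Fin N → Bool => VCswapMap σ (x,y) ∈ B2))
          ⊆ 𝒜.biUnion Badu := by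
        intro σ hσ
        have hσB2 : VCswapMap σ (x,y) ∈ B2 := (Finset.mem_filter.1 hσ).2
        have hsup : 3*ε/8 ≤ g2 (VCswapMap σ (x,y)) := hσB2
        have hex : ∃ F, F ∈ 𝓕 ∧ ε/4 <
            |avgMem F (VCswapMap σ (x,y)).1 - avgMem F (VCswapMap σ (x,y)).2| := by
          apply VCaux.exists_of_lt_biSup (by positivity)
          calc (ε/4 : ℝ) < 3*ε/8 := by linarith
          _ ≤ _ := hsup
        obtain ⟨F, hF, hFgap⟩ := hex
        set u : Finset (Fin N ⊕ Fin N) := Finset.univ.filter (fun j => point j ∈ F) with hu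
        have hu𝒜 : u ∈ 𝒜 := by
          rw [h𝒜def]
          exact Finset.mem_filter.2 ⟨Finset.mem_univ _, ⟨F, hF, fun j => by simp [hu]⟩⟩
        refine Finset.mem_biUnion.2 ⟨u, hu𝒜, ?_⟩
        rw [hBadu]
        refine Finset.mem_filter.2 ⟨Finset.mem_univ _, ?_⟩
        have hai : ∀ i : Fin N, aOf u i
            = F.indicator (fun _ => (1:ℝ)) (x i) - F.indicator (fun _ => (1:ℝ)) (y i) := by
          intro i
          rw [haOf]
          simp [hu, hpointdef, Set.indicator_apply]
        have hkey : avgMem F (VCswapMap σ (x,y)).1 - avgMem F (VCswapMap σ (x,y)).2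
            = (∑ i, VCsgn (σ i) *
                (F.indicator (fun _ => (1:ℝ)) (x i) - F.indicator (fun _ => (1:ℝ)) (y i))) / N := by
          show (∑ i, F.indicator (fun _ => (1:ℝ)) ((VCswapMap σ (x,y)).1 i)) / (N:ℝ)
              - (∑ i, F.indicator (fun _ => (1:ℝ)) ((VCswapMap σ (x,y)).2 i)) / (N:ℝ) = _
          rw [div_sub_div_same]
          congr 1
          rw [← Finset.sum_sub_distrib]
          apply Finset.sum_congr rfl
          intro i _
          by_cases h : σ i <;> simp [VCswapMap, VCsgn, h] <;> ring
        have hsum : (∑ i, VCsgn (σ i) * aOf u i)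
            = ∑ i, VCsgn (σ i) *
                (F.indicator (fun _ => (1:ℝ)) (x i) - F.indicator (fun _ => (1:ℝ)) (y i)) :=
          Finset.sum_congr rfl (fun i _ => by rw [hai i])
        rw [hsum]
        have habs : ε/4 < |∑ i, VCsgn (σ i) *
            (F.indicator (fun _ => (1:ℝ)) (x i) - F.indicator (fun _ => (1:ℝ)) (y i))| / N := by
          have := hFgap
          rw [hkey, abs_div, abs_of_pos hNR] at this
          exact this
        have := (lt_div_iff₀ hNR).1 habs
        calc (N:ℝ)*ε/4 = ε/4 * N := by ring
        _ ≤ _ := this.le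
      have hBaduCard : ∀ u ∈ 𝒜, ((Badu u).card : ℝ)
          ≤ 2^N * (2 * Real.exp (-((N:ℝ)*ε^2)/32)) := by
        intro u _
        have ha : ∀ i, |aOf u i| ≤ 1 := by
          intro i
          rw [haOf]
          by_cases h1 : Sum.inl i ∈ u <;> by_cases h2 : Sum.inr i ∈ u <;>
            simp [h1, h2]
        have hs0 : (0:ℝ) < (N:ℝ)*ε/4 := by positivity
        have hsc := VCaux.signCount hNpos (aOf u) ha hs0
        rw [hBadu]
        refine hsc.trans ?_
        have hargeq : -(((N:ℝ)*ε/4)^2)/(2*(N:ℝ)) = -((N:ℝ)*ε^2)/32 := by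
          field_simp
          ring
        rw [hargeq]
      -- combine cardinalities
      have hcard1 : (Finset.univ.filter
            (fun σ : Fin N → Bool => VCswapMap σ (x,y) ∈ B2)).card
          ≤ ∑ u ∈ 𝒜, (Badu u).card :=
        (Finset.card_le_card hcover).trans (Finset.card_biUnion_le)
      have hcard2 : ((Finset.univ.filter
            (fun σ : Fin N → Bool => VCswapMap σ (x,y) ∈ B2)).card : ℝ)
          ≤ ∑ u ∈ 𝒜, ((Badu u).card : ℝ) := by
        exact_mod_cast hcard1
      refine hcard2.trans ?_
      calc ∑ u ∈ 𝒜, ((Badu u).card : ℝ)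
          ≤ 𝒜.card • (2^N * (2 * Real.exp (-((N:ℝ)*ε^2)/32))) :=
            Finset.sum_le_card_nsmul _ _ _ hBaduCard
      _ = (𝒜.card : ℝ) * (2^N * (2 * Real.exp (-((N:ℝ)*ε^2)/32))) := by
            rw [nsmul_eq_mul]
      _ ≤ (((k+1) * (2*N)^k : ℕ) : ℝ) * (2^N * (2 * Real.exp (-((N:ℝ)*ε^2)/32))) := by
            apply mul_le_mul_of_nonneg_right _ (by positivity)
            exact_mod_cast h𝒜card
      _ = δ * 2^N := by
            rw [hδ]
            push_cast
            ring
    -- lintegral argument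
    have hpre : ∀ σ : Fin N → Bool, MeasurableSet (VCswapMap (X := X) σ ⁻¹' B2) :=
      fun σ => (VCswapMap_measurable σ) hB2meas
    have hsum2 : ∀ σ : Fin N → Bool, P2 (VCswapMap σ ⁻¹' B2) = P2 B2 := by
      intro σ
      rw [hP2, hP1]
      exact (VCswapMap_measurePreserving μ σ).measure_preimage hB2meas.nullMeasurableSet
    have hlhs : (2^N : ℝ≥0∞) * P2 B2 = ∑ σ : Fin N → Bool, P2 (VCswapMap σ ⁻¹' B2) := by
      rw [Finset.sum_congr rfl (fun σ _ => hsum2 σ)]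
      rw [Finset.sum_const]
      rw [Finset.card_univ]
      rw [Fintype.card_fun]
      simp [nsmul_eq_mul]
    have heach : ∀ σ : Fin N → Bool, P2 (VCswapMap σ ⁻¹' B2)
        = ∫⁻ z, (VCswapMap σ ⁻¹' B2).indicator (fun _ => (1:ℝ≥0∞)) z ∂P2 := by
      intro σ
      rw [lintegral_indicator (hpre σ)]
      simp
    have hint : ∑ σ : Fin N → Bool, P2 (VCswapMap σ ⁻¹' B2)
        = ∫⁻ z, ∑ σ : Fin N → Bool,
            (VCswapMap σ ⁻¹' B2).indicator (fun _ => (1:ℝ≥0∞)) z ∂P2 := by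
      rw [lintegral_finset_sum _ (fun σ _ => measurable_const.indicator (hpre σ))]
      exact Finset.sum_congr rfl (fun σ _ => heach σ)
    have hptwise : ∀ z, ∑ σ : Fin N → Bool,
        (VCswapMap σ ⁻¹' B2).indicator (fun _ => (1:ℝ≥0∞)) z ≤ ENNReal.ofReal (δ * 2^N) := by
      intro z
      have hcount := hpoint z
      have hsum : ∑ σ : Fin N → Bool, (VCswapMap σ ⁻¹' B2).indicator (fun _ => (1:ℝ≥0∞)) z
          = ((Finset.univ.filter (fun σ : Fin N → Bool => VCswapMap σ z ∈ B2)).card : ℝ≥0∞) := by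
        simp only [Set.indicator_apply, Set.mem_preimage]
        rw [Finset.sum_boole]
      rw [hsum]
      calc ((Finset.univ.filter (fun σ : Fin N → Bool => VCswapMap σ z ∈ B2)).card : ℝ≥0∞)
          = ENNReal.ofReal (((Finset.univ.filter
              (fun σ : Fin N → Bool => VCswapMap σ z ∈ B2)).card : ℝ)) := by
            rw [ENNReal.ofReal_natCast]
      _ ≤ ENNReal.ofReal (δ * 2^N) := ENNReal.ofReal_le_ofReal hcount
    have hfin : (2^N : ℝ≥0∞) * P2 B2 ≤ ENNReal.ofReal (δ * 2^N) := by
      rw [hlhs, hint]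
      calc ∫⁻ z, ∑ σ : Fin N → Bool,
          (VCswapMap σ ⁻¹' B2).indicator (fun _ => (1:ℝ≥0∞)) z ∂P2
          ≤ ∫⁻ _, ENNReal.ofReal (δ * 2^N) ∂P2 := lintegral_mono hptwise
      _ = ENNReal.ofReal (δ * 2^N) := by simp
    have hofReal : ENNReal.ofReal (δ * 2^N) = (2^N : ℝ≥0∞) * ENNReal.ofReal δ := by
      rw [mul_comm δ, ENNReal.ofReal_mul (by positivity : (0:ℝ) ≤ 2^N)]
      congr 1
      rw [show ((2:ℝ)^N) = ((2:ℝ≥0∞)^N).toReal by simp]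
      rw [ENNReal.ofReal_toReal (ENNReal.pow_ne_top ENNReal.ofNat_ne_top)]
    rw [hofReal] at hfin
    exact (ENNReal.mul_le_mul_iff_right (by positivity)
      (ENNReal.pow_ne_top ENNReal.ofNat_ne_top)).1 hfin
  -- conclusion
  calc P1 B ≤ 2 * P2 B2 := hsym
  _ ≤ 2 * ENNReal.ofReal δ := by gcongr
  _ < 1 := by
    rw [show (2:ℝ≥0∞) = ENNReal.ofReal 2 by simp]
    rw [← ENNReal.ofReal_mul (by norm_num)]
    exact ENNReal.ofReal_lt_one.2 (by rw [hδ]; linarith [hNsmall])
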